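/- Let ℓ be a learning function with ℓ̲ = ℓ'(1) and ℓ̄ = ℓ'(0), and let λ(π) = 1/H(π). Then λ is globally Lipschitz on the simplex Δ^{K−1} with respect to the ℓ¹-norm: for all π, π' ∈ Δ^{K−1}, |λ(π) − λ(π')| ≤ (ℓ̄³/ℓ̲)·‖π − π'‖₁. -/

import Mathlib

open Finset

noncomputable section

/-- The simplex Δ^{K-1}: nonnegative coordinates summing to 1. -/
def simplex (K : ℕ) : Set (Fin K → ℝ) :=
  {π | (∀ k, 0 ≤ π k) ∧ ∑ k, π k = 1}

/-- ℓ¹-norm on ℝ^K. -/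
def l1 {K : ℕ} (a : Fin K → ℝ) : ℝ := ∑ k, |a k|

/-- Coverage operator C(a,b) = ∑ min(a_k, b_k). -/
def Cov {K : ℕ} (a b : Fin K → ℝ) : ℝ := ∑ k, min (a k) (b k)

/-- A learning function ℓ : [0,∞) → [0,∞): continuous, strictly increasing,
strictly concave, ℓ(0)=0, ℓ(1)=1, continuously differentiable on [0,1]
with derivative `deriv`, ℓ'(1) > 0 (finiteness of ℓ'(0) is automatic). -/
structure LearningFunction where
  toFun : ℝ → ℝ
  deriv : ℝ → ℝ
  continuousOn : ContinuousOn toFun (Set.Ici 0)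
  strictMonoOn : StrictMonoOn toFun (Set.Ici 0)
  strictConcaveOn : StrictConcaveOn ℝ (Set.Ici 0) toFun
  nonneg : ∀ s, 0 ≤ s → 0 ≤ toFun s
  map_zero : toFun 0 = 0
  map_one : toFun 1 = 1
  hasDerivAt : ∀ s ∈ Set.Icc (0:ℝ) 1,
    HasDerivWithinAt toFun (deriv s) (Set.Icc (0:ℝ) 1) s
  derivContinuousOn : ContinuousOn deriv (Set.Icc (0:ℝ) 1)
  deriv_one_pos : 0 < deriv 1

/-- Maximal feasible scale H(π) = sup { H ≥ 0 : ∑ ℓ(H π_k) ≤ 1 }. -/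
def Hscale {K : ℕ} (L : LearningFunction) (π : Fin K → ℝ) : ℝ :=
  sSup {H : ℝ | 0 ≤ H ∧ ∑ k, L.toFun (H * π k) ≤ 1}

/-- Relative inefficiency index λ(π) = 1/H(π). -/
def lam {K : ℕ} (L : LearningFunction) (π : Fin K → ℝ) : ℝ :=
  1 / Hscale L π

/-- Γ(z) = ‖z‖₁ λ(z/‖z‖₁) for z ≠ 0, Γ(0) = 0. -/
def Gam {K : ℕ} (L : LearningFunction) (z : Fin K → ℝ) : ℝ :=
  if z = 0 then 0 else l1 z * lam L (fun k => z k / l1 z)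

/-- Fragmentation index D(π) = 1 - ∑ π_k². -/
def Dfrag {K : ℕ} (π : Fin K → ℝ) : ℝ := 1 - ∑ k, (π k) ^ 2

/-- Lipschitz constant L_Γ = ℓ̄ + 2 ℓ̄³/ℓ̲. -/
def LGam (L : LearningFunction) : ℝ := L.deriv 0 + 2 * L.deriv 0 ^ 3 / L.deriv 1

namespace LamLipAux

open Set

/-- ℓ is concave on [0,1]. -/
lemma concOn (L : LearningFunction) : ConcaveOn ℝ (Set.Icc (0:ℝ) 1) L.toFun :=
  L.strictConcaveOn.concaveOn.subset Set.Icc_subset_Ici_self (convex_Icc 0 1)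

/-- The derivative is antitone on [0,1]. -/
lemma deriv_anti (L : LearningFunction) {x y : ℝ} (hx : x ∈ Set.Icc (0:ℝ) 1)
    (hy : y ∈ Set.Icc (0:ℝ) 1) (hxy : x ≤ y) : L.deriv y ≤ L.deriv x := by
  rcases eq_or_lt_of_le hxy with rfl | h
  · exact le_refl _
  · have hg : ConvexOn ℝ (Set.Icc (0:ℝ) 1) (-L.toFun) := (concOn L).neg
    have h1 : -L.deriv x ≤ slope (-L.toFun) x y :=
      hg.le_slope_of_hasDerivWithinAt hx hy h (L.hasDerivAt x hx).neg
    have h2 : slope (-L.toFun) x y ≤ -L.deriv y :=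
      hg.slope_le_of_hasDerivWithinAt hx hy h (L.hasDerivAt y hy).neg
    linarith [h1.trans h2]

lemma deriv_pos (L : LearningFunction) {s : ℝ} (hs : s ∈ Set.Icc (0:ℝ) 1) :
    0 < L.deriv s :=
  lt_of_lt_of_le L.deriv_one_pos (deriv_anti L hs (by norm_num) hs.2)

lemma deriv_le (L : LearningFunction) {s : ℝ} (hs : s ∈ Set.Icc (0:ℝ) 1) :
    L.deriv s ≤ L.deriv 0 :=
  deriv_anti L (by norm_num) hs hs.1

/-- ℓ is Lipschitz on [0,1] with constant ℓ'(0). -/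
lemma lip (L : LearningFunction) {a b : ℝ} (ha : a ∈ Set.Icc (0:ℝ) 1)
    (hb : b ∈ Set.Icc (0:ℝ) 1) : |L.toFun b - L.toFun a| ≤ L.deriv 0 * |b - a| := by
  have := Convex.norm_image_sub_le_of_norm_hasDerivWithin_le
    (f := L.toFun) (f' := L.deriv) (s := Set.Icc (0:ℝ) 1) (C := L.deriv 0)
    (fun x hx => L.hasDerivAt x hx)
    (fun x hx => by
      rw [Real.norm_eq_abs, abs_of_pos (deriv_pos L hx)]
      exact deriv_le L hx)
    (convex_Icc 0 1) ha hb
  simpa [Real.norm_eq_abs] using this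

lemma one_le_derivzero (L : LearningFunction) : 1 ≤ L.deriv 0 := by
  have := lip L (a := 0) (b := 1) (by norm_num) (by norm_num)
  simpa [L.map_zero, L.map_one] using this

lemma toFun_le (L : LearningFunction) {s : ℝ} (hs : s ∈ Set.Icc (0:ℝ) 1) :
    L.toFun s ≤ L.deriv 0 * s := by
  have h := lip L (a := 0) (b := s) (by norm_num) hs
  rw [L.map_zero, sub_zero, sub_zero, abs_of_nonneg hs.1] at h
  exact (le_abs_self _).trans h

lemma le_toFun (L : LearningFunction) {s : ℝ} (hs : s ∈ Set.Icc (0:ℝ) 1) :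
    s ≤ L.toFun s := by
  have h := L.strictConcaveOn.concaveOn.2 (x := 1) (y := 0)
    (by norm_num : (1:ℝ) ∈ Set.Ici (0:ℝ)) (by norm_num : (0:ℝ) ∈ Set.Ici (0:ℝ))
    hs.1 (by linarith [hs.2] : 0 ≤ 1 - s) (by ring)
  simpa [L.map_zero, L.map_one, smul_eq_mul] using h

/-- Lower growth bound: ℓ(bp) - ℓ(ap) ≥ ℓ'(1) p (b - a). -/
lemma growth (L : LearningFunction) {p a b : ℝ} (hp : p ∈ Set.Icc (0:ℝ) 1)
    (ha : a ∈ Set.Icc (0:ℝ) 1) (hb : b ∈ Set.Icc (0:ℝ) 1) (hab : a ≤ b) :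
    L.deriv 1 * p * (b - a) ≤ L.toFun (b * p) - L.toFun (a * p) := by
  have hmaps : ∀ t ∈ Set.Icc (0:ℝ) 1, t * p ∈ Set.Icc (0:ℝ) 1 := fun t ht =>
    ⟨mul_nonneg ht.1 hp.1, mul_le_one₀ ht.2 hp.1 hp.2⟩
  set g : ℝ → ℝ := fun t => L.toFun (t * p) - L.deriv 1 * p * t with hg
  have hcont : ContinuousOn g (Set.Icc (0:ℝ) 1) := by
    apply ContinuousOn.sub
    · exact L.continuousOn.comp ((continuous_id.mul continuous_const).continuousOn)
        (fun t ht => mul_nonneg ht.1 hp.1)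
    · exact (continuous_const.mul continuous_id).continuousOn
  have hderiv : ∀ x ∈ interior (Set.Icc (0:ℝ) 1),
      HasDerivWithinAt g (L.deriv (x * p) * p - L.deriv 1 * p)
        (interior (Set.Icc (0:ℝ) 1)) x := by
    intro x hx
    have hxI : x ∈ Set.Icc (0:ℝ) 1 := interior_subset hx
    have h1 : HasDerivWithinAt (fun t : ℝ => L.toFun (t * p)) (L.deriv (x * p) * p)
        (interior (Set.Icc (0:ℝ) 1)) x := by
      have hcomp := HasDerivWithinAt.comp
        x (L.hasDerivAt (x * p) (hmaps x hxI))
        ((hasDerivWithinAt_id x (interior (Set.Icc (0:ℝ) 1))).mul_const p)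
        (fun t ht => hmaps t (interior_subset ht))
      simp only [one_mul] at hcomp
      exact hcomp
    have h2 : HasDerivWithinAt (fun t : ℝ => L.deriv 1 * p * t) (L.deriv 1 * p)
        (interior (Set.Icc (0:ℝ) 1)) x := by
      simpa using (hasDerivWithinAt_id x (interior (Set.Icc (0:ℝ) 1))).const_mul
        (L.deriv 1 * p)
    exact h1.sub h2
  have hnonneg : ∀ x ∈ interior (Set.Icc (0:ℝ) 1),
      0 ≤ L.deriv (x * p) * p - L.deriv 1 * p := by
    intro x hx
    have hxI : x ∈ Set.Icc (0:ℝ) 1 := interior_subset hx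
    have hxp : x * p ∈ Set.Icc (0:ℝ) 1 := hmaps x hxI
    have h1 : L.deriv 1 ≤ L.deriv (x * p) := deriv_anti L hxp (by norm_num) hxp.2
    nlinarith [hp.1]
  have hmono : MonotoneOn g (Set.Icc (0:ℝ) 1) :=
    monotoneOn_of_hasDerivWithinAt_nonneg (convex_Icc 0 1) hcont hderiv hnonneg
  have := hmono ha hb hab
  simp only [hg] at this
  linarith

/-- Characterization of Hscale on the simplex. -/
lemma Hscale_spec {K : ℕ} (hK : 1 ≤ K) (L : LearningFunction) {π : Fin K → ℝ}
    (hπ : π ∈ simplex K) :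
    1 / L.deriv 0 ≤ Hscale L π ∧ Hscale L π ≤ 1 ∧
      ∑ k, L.toFun (Hscale L π * π k) = 1 := by
  obtain ⟨hpos, hsum⟩ := hπ
  have hb1 : 1 ≤ L.deriv 0 := one_le_derivzero L
  have hb0 : 0 < L.deriv 0 := lt_of_lt_of_le one_pos hb1
  have hπk1 : ∀ k, π k ≤ 1 := by
    intro k
    rw [← hsum]
    exact Finset.single_le_sum (fun i _ => hpos i) (Finset.mem_univ k)
  have hπmem : ∀ k, π k ∈ Set.Icc (0:ℝ) 1 := fun k => ⟨hpos k, hπk1 k⟩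
  have hne : Nonempty (Fin K) := ⟨⟨0, hK⟩⟩
  have hexk : ∃ k, 0 < π k := by
    by_contra h
    push_neg at h
    have : ∑ k, π k = 0 :=
      Finset.sum_eq_zero fun k _ => le_antisymm (h k) (hpos k)
    rw [hsum] at this
    norm_num at this
  set F : ℝ → ℝ := fun H => ∑ k, L.toFun (H * π k) with hF
  have hFmono : StrictMonoOn F (Set.Ici (0:ℝ)) := by
    intro H1 h1 H2 h2 hlt
    obtain ⟨k₀, hk₀⟩ := hexk
    have h1' : (0:ℝ) ≤ H1 := h1
    refine Finset.sum_lt_sum (fun k _ => ?_) ⟨k₀, Finset.mem_univ k₀, ?_⟩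
    · rcases (hpos k).eq_or_lt with heqz | hk
      · rw [← heqz, mul_zero, mul_zero]
      · exact (L.strictMonoOn (Set.mem_Ici.2 (mul_nonneg h1' (hpos k)))
          (Set.mem_Ici.2 (mul_nonneg (h1'.trans hlt.le) (hpos k)))
          (mul_lt_mul_of_pos_right hlt hk)).le
    · exact L.strictMonoOn (Set.mem_Ici.2 (mul_nonneg h1' (hpos k₀)))
        (Set.mem_Ici.2 (mul_nonneg (h1'.trans hlt.le) (hpos k₀)))
        (mul_lt_mul_of_pos_right hlt hk₀)
  have hFcont : ContinuousOn F (Set.Icc (0:ℝ) 1) := by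
    apply continuousOn_finset_sum
    intro k _
    exact L.continuousOn.comp ((continuous_id.mul continuous_const).continuousOn)
      (fun t ht => mul_nonneg ht.1 (hpos k))
  have hF0 : F 0 = 0 := by simp [hF, L.map_zero]
  have hF1 : 1 ≤ F 1 := by
    calc (1:ℝ) = ∑ k, π k := hsum.symm
      _ ≤ ∑ k, L.toFun (1 * π k) := by
          apply Finset.sum_le_sum
          intro k _
          rw [one_mul]
          exact le_toFun L (hπmem k)
  have h1mem : (1:ℝ) ∈ Set.Icc (F 0) (F 1) := ⟨by rw [hF0]; norm_num, hF1⟩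
  obtain ⟨Hs, hHs, hFHs⟩ :=
    intermediate_value_Icc (by norm_num : (0:ℝ) ≤ 1) hFcont h1mem
  have hset : {H : ℝ | 0 ≤ H ∧ F H ≤ 1} = Set.Icc 0 Hs := by
    ext H
    constructor
    · rintro ⟨h0, hle⟩
      refine ⟨h0, le_of_not_gt fun hlt => ?_⟩
      have := hFmono (Set.mem_Ici.2 hHs.1) (Set.mem_Ici.2 h0) hlt
      rw [hFHs] at this
      exact absurd hle (not_le.2 this)
    · rintro ⟨h0, hle⟩
      refine ⟨h0, ?_⟩
      rw [← hFHs]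
      exact hFmono.monotoneOn (Set.mem_Ici.2 h0) (Set.mem_Ici.2 hHs.1) hle
  have hHeq : Hscale L π = Hs := by
    have : {H : ℝ | 0 ≤ H ∧ ∑ k, L.toFun (H * π k) ≤ 1} = Set.Icc 0 Hs := hset
    rw [Hscale, this]
    exact csSup_Icc hHs.1
  have hlow : 1 / L.deriv 0 ≤ Hs := by
    have hmem : (1 / L.deriv 0) ∈ {H : ℝ | 0 ≤ H ∧ F H ≤ 1} := by
      refine ⟨(one_div_pos.2 hb0).le, ?_⟩
      show (∑ k, L.toFun ((1 / L.deriv 0) * π k)) ≤ 1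
      calc (∑ k, L.toFun ((1 / L.deriv 0) * π k)) ≤ ∑ k, π k := ?_
        _ = 1 := hsum
      apply Finset.sum_le_sum
      intro k _
      have harg : (1 / L.deriv 0) * π k ∈ Set.Icc (0:ℝ) 1 := by
        constructor
        · exact mul_nonneg (one_div_pos.2 hb0).le (hpos k)
        · calc (1 / L.deriv 0) * π k ≤ 1 * π k := by
                apply mul_le_mul_of_nonneg_right _ (hpos k)
                rw [div_le_one hb0]; exact hb1
              _ ≤ 1 := by rw [one_mul]; exact hπk1 k
      calc L.toFun ((1 / L.deriv 0) * π k) ≤ L.deriv 0 * ((1 / L.deriv 0) * π k) :=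
            toFun_le L harg
        _ = π k := by field_simp
    rw [hset] at hmem
    exact hmem.2
  exact ⟨hHeq ▸ hlow, hHeq ▸ hHs.2, hHeq ▸ hFHs⟩

lemma l1_nonneg {K : ℕ} (a : Fin K → ℝ) : 0 ≤ l1 a :=
  Finset.sum_nonneg fun k _ => abs_nonneg _

lemma l1_sub_comm {K : ℕ} (a b : Fin K → ℝ) : l1 (a - b) = l1 (b - a) := by
  unfold l1
  apply Finset.sum_congr rfl
  intro k _
  simp [Pi.sub_apply, abs_sub_comm]

/-- One-sided bound on the difference of Hscales. -/
lemma Hscale_sub_le {K : ℕ} (hK : 1 ≤ K) (L : LearningFunction) {π π' : Fin K → ℝ}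
    (hπ : π ∈ simplex K) (hπ' : π' ∈ simplex K) :
    Hscale L π - Hscale L π' ≤ (L.deriv 0 / L.deriv 1) * l1 (π - π') := by
  obtain ⟨hlo, hhi, heq⟩ := Hscale_spec hK L hπ
  obtain ⟨hlo', hhi', heq'⟩ := Hscale_spec hK L hπ'
  set H := Hscale L π
  set H' := Hscale L π'
  have hb1 : 1 ≤ L.deriv 0 := one_le_derivzero L
  have hb0 : (0:ℝ) < L.deriv 0 := lt_of_lt_of_le one_pos hb1
  have hl0 : (0:ℝ) < L.deriv 1 := L.deriv_one_pos
  have hd0 : 0 ≤ l1 (π - π') := l1_nonneg _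
  rcases le_or_gt H H' with hle | hlt
  · have : (0:ℝ) ≤ (L.deriv 0 / L.deriv 1) * l1 (π - π') :=
      mul_nonneg (div_nonneg hb0.le hl0.le) hd0
    linarith
  · have hH0 : 0 ≤ H := le_trans (one_div_pos.2 hb0).le hlo
    have hH'0 : 0 ≤ H' := le_trans (one_div_pos.2 hb0).le hlo'
    have hHmem : H ∈ Set.Icc (0:ℝ) 1 := ⟨hH0, hhi⟩
    have hH'mem : H' ∈ Set.Icc (0:ℝ) 1 := ⟨hH'0, hhi'⟩
    obtain ⟨hpos, hsum⟩ := hπ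
    obtain ⟨hpos', hsum'⟩ := hπ'
    have hπk1 : ∀ k, π k ≤ 1 := by
      intro k; rw [← hsum]
      exact Finset.single_le_sum (fun i _ => hpos i) (Finset.mem_univ k)
    have hπ'k1 : ∀ k, π' k ≤ 1 := by
      intro k; rw [← hsum']
      exact Finset.single_le_sum (fun i _ => hpos' i) (Finset.mem_univ k)
    -- lower bound: ℓ̲ (H - H') ≤ F(H,π') - F(H',π')
    have key1 : L.deriv 1 * (H - H') ≤
        (∑ k, L.toFun (H * π' k)) - ∑ k, L.toFun (H' * π' k) := by
      have hterm : ∀ k, L.deriv 1 * π' k * (H - H') ≤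
          L.toFun (H * π' k) - L.toFun (H' * π' k) := by
        intro k
        have := growth L (p := π' k) (a := H') (b := H)
          ⟨hpos' k, hπ'k1 k⟩ hH'mem hHmem hlt.le
        calc L.deriv 1 * π' k * (H - H') = L.deriv 1 * π' k * (H - H') := rfl
          _ ≤ L.toFun (H * π' k) - L.toFun (H' * π' k) := by
              rw [mul_comm H (π' k), mul_comm H' (π' k)] at this ⊢
              exact this
      calc L.deriv 1 * (H - H') = ∑ k, L.deriv 1 * π' k * (H - H') := by
            rw [← Finset.sum_mul, ← Finset.mul_sum, hsum', mul_one]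
        _ ≤ ∑ k, (L.toFun (H * π' k) - L.toFun (H' * π' k)) :=
            Finset.sum_le_sum fun k _ => hterm k
        _ = (∑ k, L.toFun (H * π' k)) - ∑ k, L.toFun (H' * π' k) :=
            Finset.sum_sub_distrib _ _
    -- upper bound: F(H,π') - F(H,π) ≤ ℓ̄ l1(π - π')
    have key2 : (∑ k, L.toFun (H * π' k)) - (∑ k, L.toFun (H * π k)) ≤
        L.deriv 0 * l1 (π - π') := by
      have hterm : ∀ k, L.toFun (H * π' k) - L.toFun (H * π k) ≤
          L.deriv 0 * |π k - π' k| := by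
        intro k
        have hargk : H * π k ∈ Set.Icc (0:ℝ) 1 :=
          ⟨mul_nonneg hH0 (hpos k), mul_le_one₀ hhi (hpos k) (hπk1 k)⟩
        have hargk' : H * π' k ∈ Set.Icc (0:ℝ) 1 :=
          ⟨mul_nonneg hH0 (hpos' k), mul_le_one₀ hhi (hpos' k) (hπ'k1 k)⟩
        have h := lip L hargk hargk'
        have habs : |H * π' k - H * π k| = H * |π' k - π k| := by
          rw [← mul_sub, abs_mul, abs_of_nonneg hH0]
        calc L.toFun (H * π' k) - L.toFun (H * π k)
            ≤ |L.toFun (H * π' k) - L.toFun (H * π k)| := le_abs_self _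
          _ ≤ L.deriv 0 * |H * π' k - H * π k| := h
          _ = L.deriv 0 * (H * |π' k - π k|) := by rw [habs]
          _ ≤ L.deriv 0 * (1 * |π' k - π k|) := by
              apply mul_le_mul_of_nonneg_left _ hb0.le
              exact mul_le_mul_of_nonneg_right hhi (abs_nonneg _)
          _ = L.deriv 0 * |π k - π' k| := by rw [one_mul, abs_sub_comm]
      calc (∑ k, L.toFun (H * π' k)) - (∑ k, L.toFun (H * π k))
          = ∑ k, (L.toFun (H * π' k) - L.toFun (H * π k)) :=
            (Finset.sum_sub_distrib _ _).symm
        _ ≤ ∑ k, L.deriv 0 * |π k - π' k| := Finset.sum_le_sum fun k _ => hterm k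
        _ = L.deriv 0 * l1 (π - π') := by
            simp only [l1, Pi.sub_apply, Finset.mul_sum]
    have hcomb : L.deriv 1 * (H - H') ≤ L.deriv 0 * l1 (π - π') := by
      have := key1
      rw [heq'] at this
      rw [heq] at key2
      linarith
    rw [div_mul_eq_mul_div, le_div_iff₀ hl0]
    linarith [hcomb]

/-- One-sided bound for λ. -/
lemma lam_sub_le {K : ℕ} (hK : 1 ≤ K) (L : LearningFunction) {π π' : Fin K → ℝ}
    (hπ : π ∈ simplex K) (hπ' : π' ∈ simplex K) :
    lam L π - lam L π' ≤ (L.deriv 0 ^ 3 / L.deriv 1) * l1 (π - π') := by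
  obtain ⟨hlo, hhi, _⟩ := Hscale_spec hK L hπ
  obtain ⟨hlo', hhi', _⟩ := Hscale_spec hK L hπ'
  set H := Hscale L π
  set H' := Hscale L π'
  have hb1 : 1 ≤ L.deriv 0 := one_le_derivzero L
  have hb0 : (0:ℝ) < L.deriv 0 := lt_of_lt_of_le one_pos hb1
  have hl0 : (0:ℝ) < L.deriv 1 := L.deriv_one_pos
  have hd0 : 0 ≤ l1 (π - π') := l1_nonneg _
  have hH0 : 0 < H := lt_of_lt_of_le (one_div_pos.2 hb0) hlo
  have hH'0 : 0 < H' := lt_of_lt_of_le (one_div_pos.2 hb0) hlo'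
  rcases le_or_gt H' H with hle | hlt
  · -- 1/H ≤ 1/H', so LHS ≤ 0 ≤ RHS
    have h1 : lam L π ≤ lam L π' := by
      unfold lam
      apply div_le_div_of_nonneg_left one_pos.le hH'0 hle
    have h2 : (0:ℝ) ≤ (L.deriv 0 ^ 3 / L.deriv 1) * l1 (π - π') :=
      mul_nonneg (div_nonneg (pow_nonneg hb0.le 3) hl0.le) hd0
    linarith
  · have hkey : H' - H ≤ (L.deriv 0 / L.deriv 1) * l1 (π' - π) :=
      Hscale_sub_le hK L hπ' hπ
    rw [l1_sub_comm] at hkey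
    have hdiff : lam L π - lam L π' = (H' - H) / (H * H') := by
      show 1 / H - 1 / H' = _
      field_simp
    rw [hdiff]
    have hprod : 1 / L.deriv 0 * (1 / L.deriv 0) ≤ H * H' :=
      mul_le_mul hlo hlo' (one_div_pos.2 hb0).le hH0.le
    have hprodpos : (0:ℝ) < H * H' := mul_pos hH0 hH'0
    have hinv : 1 / (H * H') ≤ L.deriv 0 ^ 2 := by
      rw [div_le_iff₀ hprodpos]
      calc (1:ℝ) = L.deriv 0 ^ 2 * (1 / L.deriv 0 * (1 / L.deriv 0)) := by
            field_simp
        _ ≤ L.deriv 0 ^ 2 * (H * H') := by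
            apply mul_le_mul_of_nonneg_left hprod (by positivity)
    calc (H' - H) / (H * H') = (H' - H) * (1 / (H * H')) := by ring
      _ ≤ ((L.deriv 0 / L.deriv 1) * l1 (π - π')) * (1 / (H * H')) :=
          mul_le_mul_of_nonneg_right hkey (one_div_pos.2 hprodpos).le
      _ ≤ ((L.deriv 0 / L.deriv 1) * l1 (π - π')) * L.deriv 0 ^ 2 :=
          mul_le_mul_of_nonneg_left hinv
            (mul_nonneg (div_nonneg hb0.le hl0.le) hd0)
      _ = (L.deriv 0 ^ 3 / L.deriv 1) * l1 (π - π') := by ring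

end LamLipAux

/-- λ is globally Lipschitz on the simplex with constant ℓ̄³/ℓ̲ in the ℓ¹-norm. -/
theorem lam_lipschitz {K : ℕ} (hK : 1 ≤ K) (L : LearningFunction)
    (π π' : Fin K → ℝ) (hπ : π ∈ simplex K) (hπ' : π' ∈ simplex K) :
    |lam L π - lam L π'| ≤ (L.deriv 0 ^ 3 / L.deriv 1) * l1 (π - π') := by
  rw [abs_sub_le_iff]
  constructor
  · exact LamLipAux.lam_sub_le hK L hπ hπ'
  · rw [LamLipAux.l1_sub_comm π π']
    exact LamLipAux.lam_sub_le hK L hπ' hπ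

end
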